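/- For every tree T with 2n vertices (n ≥ 1), the vertex set of T can be partitioned into two sets R and B of size n each, and there exist trees T_R on R and T_B on B, such that every edge of T_R and every edge of T_B joins two vertices whose distance in T is at most 2. -/

import Mathlib

open List SimpleGraph

namespace TwoPart


variable {V : Type*}

/-- Every element except possibly the first has an earlier element at `G`-distance ≤ 2. -/
def GoodL (G : SimpleGraph V) (l : List V) : Prop :=
  ∀ a x z, l = a ++ x :: z → a ≠ [] → ∃ y ∈ a, G.dist y x ≤ 2

lemma goodL_singleton (G : SimpleGraph V) (v : V) : GoodL G [v] := by
  intro a x z h ha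
  rcases a with _ | ⟨b, a⟩
  · exact absurd rfl ha
  · simp only [cons_append, cons.injEq] at h
    exact absurd h.2 (by simp)

lemma goodL_pair (G : SimpleGraph V) {u v : V} (h : G.dist u v ≤ 2) : GoodL G [u, v] := by
  intro a x z hd ha
  rcases a with _ | ⟨b, (_ | ⟨b2, a⟩)⟩
  · exact absurd rfl ha
  · simp only [cons_append, nil_append, cons.injEq] at hd
    obtain ⟨rfl, rfl, -⟩ := hd
    exact ⟨u, by simp, h⟩
  · simp only [cons_append, cons.injEq] at hd
    exact absurd hd.2.2 (by simp)

lemma GoodL.of_append_left {G : SimpleGraph V} {A Z : List V} (h : GoodL G (A ++ Z)) :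
    GoodL G A := by
  intro a x z hd ha
  exact h a x (z ++ Z) (by rw [hd]; simp) ha

lemma GoodL.insert {G : SimpleGraph V} {A Z : List V} {c : V}
    (h : GoodL G (A ++ Z))
    (h1 : A ≠ [] → ∃ y ∈ A, G.dist y c ≤ 2)
    (h2 : ∀ x z', Z = x :: z' → A = [] → G.dist c x ≤ 2) :
    GoodL G (A ++ c :: Z) := by
  intro a x z hd ha
  rw [List.append_eq_append_iff] at hd
  rcases hd with ⟨t, ht1, ht2⟩ | ⟨t, ht1, ht2⟩
  · rcases t with _ | ⟨t0, t⟩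
    · simp only [append_nil] at ht1
      simp only [nil_append, cons.injEq] at ht2
      obtain ⟨rfl, rfl⟩ := ht2
      subst ht1
      exact h1 ha
    · simp only [cons_append, cons.injEq] at ht2
      obtain ⟨rfl, hZ⟩ := ht2
      rcases eq_or_ne (A ++ t) [] with hAt | hAt
      · rw [List.append_eq_nil_iff] at hAt
        obtain ⟨rfl, rfl⟩ := hAt
        simp only [nil_append] at hZ ht1
        subst ht1
        exact ⟨c, by simp, h2 x z hZ rfl⟩
      · obtain ⟨y, hy, hdy⟩ := h (A ++ t) x z (by rw [hZ, List.append_assoc]) hAt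
        refine ⟨y, ?_, hdy⟩
        subst ht1
        rcases List.mem_append.mp hy with hy | hy
        · exact List.mem_append_left _ hy
        · exact List.mem_append_right _ (List.mem_cons_of_mem _ hy)
  · rcases t with _ | ⟨t0, t⟩
    · simp only [append_nil] at ht1
      simp only [nil_append, cons.injEq] at ht2
      obtain ⟨rfl, rfl⟩ := ht2
      subst ht1
      exact h1 ha
    · simp only [cons_append, cons.injEq] at ht2
      obtain ⟨rfl, hz⟩ := ht2
      exact h a x (t ++ Z) (by rw [ht1, List.append_assoc]; simp) ha

lemma GoodL.map {V' : Type*} {G : SimpleGraph V} {G' : SimpleGraph V'} {f : V' → V}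
    (hf : ∀ x y : V', G'.dist x y ≤ 2 → G.dist (f x) (f y) ≤ 2) {l : List V'}
    (h : GoodL G' l) : GoodL G (l.map f) := by
  intro a x z hd ha
  rw [List.map_eq_append_iff] at hd
  obtain ⟨l₁, l₂, rfl, rfl, hmap2⟩ := hd
  rw [List.map_eq_cons_iff] at hmap2
  obtain ⟨x', l₂', rfl, rfl, rfl⟩ := hmap2
  obtain ⟨y, hy, hdy⟩ := h l₁ x' l₂' rfl (by rintro rfl; exact ha rfl)
  exact ⟨f y, List.mem_map_of_mem hy, hf _ _ hdy⟩



variable {σ : Type*}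

def parentGraph (par : σ → σ) : SimpleGraph σ where
  Adj x y := x ≠ y ∧ (par x = y ∨ par y = x)
  symm := ⟨by rintro x y ⟨h1, h2⟩; exact ⟨h1.symm, h2.symm⟩⟩
  loopless := ⟨by rintro x ⟨h1, -⟩; exact h1 rfl⟩

lemma parentGraph_reachable (par : σ → σ) (idx : σ → ℕ) (rt : σ)
    (hpar : ∀ x, x ≠ rt → idx (par x) < idx x) :
    ∀ x, (parentGraph par).Reachable x rt := by
  have key : ∀ n x, idx x ≤ n → (parentGraph par).Reachable x rt := by
    intro n
    induction n with
    | zero =>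
      intro x hx
      by_cases h : x = rt
      · subst h; rfl
      · exact absurd hx (by have := hpar x h; omega)
    | succ n IH =>
      intro x hx
      by_cases h : x = rt
      · subst h; rfl
      · have h1 := hpar x h
        have adj : (parentGraph par).Adj x (par x) :=
          ⟨fun e => by rw [← e] at h1; omega, Or.inl rfl⟩
        exact adj.reachable.trans (IH (par x) (by omega))
  exact fun x => key (idx x) x le_rfl

lemma exists_last_edge {G : SimpleGraph σ} :
    ∀ {u v : σ} (p : G.Walk u v), 0 < p.length →
      ∃ d, d ∈ p.support ∧ G.Adj d v ∧ s(d, v) ∈ p.edges := by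
  intro u v p
  induction p with
  | nil => simp
  | @cons u b v h q IH =>
    intro _
    rcases Nat.eq_zero_or_pos q.length with h0 | hpos
    · have hb : b = v := Walk.eq_of_length_eq_zero h0
      subst hb
      exact ⟨u, by simp, h, by simp⟩
    · obtain ⟨d, hd1, hd2, hd3⟩ := IH hpos
      exact ⟨d, by simp [hd1], hd2, by simp [hd3]⟩

lemma parentGraph_acyclic (par : σ → σ) (idx : σ → ℕ) (rt : σ)
    (hinj : Function.Injective idx) (hrt : par rt = rt)
    (hpar : ∀ x, x ≠ rt → idx (par x) < idx x) :
    (parentGraph par).IsAcyclic := by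
  classical
  intro v c hc
  have hvmem : v ∈ c.support.toFinset := by simp
  obtain ⟨m, hm, hmax⟩ := Finset.exists_max_image c.support.toFinset idx ⟨v, hvmem⟩
  rw [List.mem_toFinset] at hm
  have hmax' : ∀ b ∈ (c.rotate m hm).support, idx b ≤ idx m := by
    intro b hb
    rcases eq_or_ne b m with rfl | hbm
    · exact le_rfl
    · have : b ∈ (c.rotate m hm).support.tail := by
        have hsc := (c.rotate m hm).support_eq_cons
        rw [hsc] at hb
        rcases List.mem_cons.mp hb with hb1 | hb1
        · exact absurd hb1 hbm
        · exact hb1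
      have : b ∈ c.support.tail := ((Walk.support_rotate c m hm).mem_iff).mp this
      exact hmax b (by rw [List.mem_toFinset]; exact List.mem_of_mem_tail this)
  -- now derive False from the rotated cycle
  have hc' := hc.rotate hm
  revert hmax' hc'
  generalize c.rotate m hm = c'
  intro hmax' hc'
  -- analyze c'
  cases c' with
  | nil => exact hc'.not_of_nil
  | @cons _ b _ hadj q =>
    -- hadj : Adj m b, q : Walk b m
    have hmb : m ≠ b := hadj.1
    have hbmem : b ∈ q.support := q.start_mem_support
    have hb_le : idx b ≤ idx m := hmax' b (by simp [hbmem])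
    have hb_lt : idx b < idx m :=
      lt_of_le_of_ne hb_le (fun e => hmb (hinj e).symm)
    -- m ≠ rt
    have hmrt : m ≠ rt := by
      intro hme
      rcases hadj.2 with h' | h'
      · rw [hme, hrt] at h'
        exact hmb (hme.trans h')
      · have hbrt : b ≠ rt := fun hbe => hmb (hme.trans hbe.symm)
        have h2 := hpar b hbrt
        rw [h'] at h2
        omega
    -- par m = b
    have hparm : par m = b := by
      rcases hadj.2 with h' | h'
      · exact h'
      · exfalso
        have hbrt : b ≠ rt := by
          intro hbe
          rw [hbe, hrt] at h'
          exact hmrt h'.symm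
        have h2 := hpar b hbrt
        rw [h'] at h2
        omega
    -- last edge of q
    have hqpos : 0 < q.length := by
      rcases Nat.eq_zero_or_pos q.length with h0 | h
      · exact absurd (Walk.eq_of_length_eq_zero h0) (fun e => hmb e.symm)
      · exact h
    obtain ⟨d, hdsup, hdadj, hdedge⟩ := exists_last_edge q hqpos
    have hd_le : idx d ≤ idx m := hmax' d (by simp [hdsup])
    have hdm : d ≠ m := hdadj.1
    have hd_lt : idx d < idx m := lt_of_le_of_ne hd_le (fun e => hdm (hinj e))
    have hparm2 : par m = d := by
      rcases hdadj.2 with h' | h'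
      · exfalso
        have hdrt : d ≠ rt := by
          intro hde
          rw [hde, hrt] at h'
          exact hmrt h'.symm
        have h2 := hpar d hdrt
        rw [h'] at h2
        omega
      · exact h'
    -- so b = d, and the first edge s(m,b) coincides with the last edge s(d,m) ∈ q.edges
    have hbd : b = d := by rw [← hparm, hparm2]
    have htrail : (Walk.cons hadj q).IsTrail := hc'.isTrail
    rw [Walk.isTrail_cons] at htrail
    apply htrail.2
    subst hbd
    rwa [Sym2.eq_swap] at hdedge

lemma parentGraph_isTree [Nonempty σ] (par : σ → σ) (idx : σ → ℕ) (rt : σ)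
    (hinj : Function.Injective idx) (hrt : par rt = rt)
    (hpar : ∀ x, x ≠ rt → idx (par x) < idx x) :
    (parentGraph par).IsTree := by
  refine ⟨?_, parentGraph_acyclic par idx rt hinj hrt hpar⟩
  rw [connected_iff]
  refine ⟨fun x y => ?_, inferInstance⟩
  exact (parentGraph_reachable par idx rt hpar x).trans
    (parentGraph_reachable par idx rt hpar y).symm

lemma tree_side {V : Type*} [DecidableEq V] {G : SimpleGraph V} (m : List V)
    (hm : m ≠ []) (hnd : m.Nodup) (hg : GoodL G m) (R : Finset V)
    (hmem : ∀ x, x ∈ R ↔ x ∈ m) :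
    ∃ HR : SimpleGraph {x // x ∈ R}, HR.IsTree ∧
      ∀ u v : {x // x ∈ R}, HR.Adj u v → G.dist u.1 v.1 ≤ 2 := by
  classical
  have hne : Nonempty {x // x ∈ R} := ⟨⟨m.head hm, (hmem _).mpr (List.head_mem hm)⟩⟩
  set rt : {x // x ∈ R} := ⟨m.head hm, (hmem _).mpr (List.head_mem hm)⟩ with hrtdef
  set idx : {x // x ∈ R} → ℕ := fun x => List.idxOf x.1 m with hidxdef
  have hinj : Function.Injective idx := by
    intro x y hxy
    have hx : x.1 ∈ m := (hmem _).mp x.2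
    have hy : y.1 ∈ m := (hmem _).mp y.2
    exact Subtype.ext ((List.idxOf_inj hx).mp hxy)
  have hstep : ∀ x : {x // x ∈ R}, x ≠ rt →
      ∃ y : {x // x ∈ R}, idx y < idx x ∧ G.dist y.1 x.1 ≤ 2 := by
    intro x hx
    have hxm : x.1 ∈ m := (hmem _).mp x.2
    obtain ⟨A, Z, hAZ⟩ := List.append_of_mem hxm
    have hA : A ≠ [] := by
      rintro rfl
      rw [List.nil_append] at hAZ
      apply hx
      apply Subtype.ext
      subst hAZ
      simp [hrtdef]
    obtain ⟨y0, hy0A, hy0d⟩ := hg A x.1 Z hAZ hA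
    have hy0m : y0 ∈ m := by rw [hAZ]; exact List.mem_append_left _ hy0A
    refine ⟨⟨y0, (hmem _).mpr hy0m⟩, ?_, hy0d⟩
    have hnd2 := hnd
    rw [hAZ] at hnd2
    have hxA : x.1 ∉ A := by
      have h3 := (List.nodup_middle.mp hnd2)
      rw [List.nodup_cons] at h3
      intro hmem2
      exact h3.1 (List.mem_append_left _ hmem2)
    simp only [hidxdef]
    rw [hAZ, List.idxOf_append_of_mem hy0A, List.idxOf_append_of_notMem hxA,
      List.idxOf_cons_self]
    have := List.idxOf_lt_length_iff.mpr hy0A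
    omega
  set par : {x // x ∈ R} → {x // x ∈ R} := fun x =>
    if h : x = rt then x else Classical.choose (hstep x h) with hpardef
  have hrt : par rt = rt := by simp [hpardef]
  have hpar : ∀ x, x ≠ rt → idx (par x) < idx x := by
    intro x hx
    simp only [hpardef, dif_neg hx]
    exact (Classical.choose_spec (hstep x hx)).1
  refine ⟨parentGraph par, parentGraph_isTree par idx rt hinj hrt hpar, ?_⟩
  rintro u v ⟨hne', h2 | h2⟩
  · have hu : u ≠ rt := by
      intro he
      rw [he, hrt] at h2
      exact hne' (he.trans h2)
    have hs := (Classical.choose_spec (hstep u hu)).2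
    rw [hpardef] at h2
    simp only [dif_neg hu] at h2
    rw [h2] at hs
    rw [SimpleGraph.dist_comm]
    exact hs
  · have hv : v ≠ rt := by
      intro he
      rw [he, hrt] at h2
      exact hne' (h2.symm.trans he.symm)
    have hs := (Classical.choose_spec (hstep v hv)).2
    rw [hpardef] at h2
    simp only [dif_neg hv] at h2
    rw [h2] at hs
    exact hs

universe u

lemma key : ∀ (N : ℕ) {W : Type u} [Fintype W] [DecidableEq W] (G : SimpleGraph W),
    G.IsTree → Fintype.card W = N →
    ∃ l : List W, l.Nodup ∧ (∀ x : W, x ∈ l) ∧ GoodL G l ∧ GoodL G l.reverse := by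
  intro N
  induction N using Nat.strong_induction_on with
  | _ N IH =>
  intro W _ _ G hG hcard
  obtain ⟨hconn, hacy⟩ := (SimpleGraph.isTree_iff G).mp hG
  have hNpos : 0 < N := hcard ▸ Fintype.card_pos_iff.mpr hconn.nonempty
  rcases Nat.lt_or_ge N 2 with hN1 | hN2
  · -- N = 1
    have hN : N = 1 := by omega
    rw [hN] at hcard
    obtain ⟨x, hx⟩ := Fintype.card_eq_one_iff.mp hcard
    exact ⟨[x], by simp, fun y => by simp [hx y], goodL_singleton G x, by
      simpa using goodL_singleton G x⟩
  · -- N ≥ 2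
    obtain ⟨w⟩ : Nonempty W := hconn.nonempty
    obtain ⟨ℓ, -, hmax⟩ := Finset.exists_max_image Finset.univ (G.dist w) ⟨w, Finset.mem_univ w⟩
    have hlw : ℓ ≠ w := by
      obtain ⟨v, hv⟩ := Fintype.exists_ne_of_one_lt_card (by omega : 1 < Fintype.card W) w
      have h1 : 0 < G.dist w v := hconn.pos_dist_of_ne (Ne.symm hv)
      have h2 := hmax v (Finset.mem_univ v)
      intro he
      rw [he, SimpleGraph.dist_self] at h2
      omega
    have hcut : ∀ x : W, x ≠ ℓ → ∃ p : G.Walk w x, ℓ ∉ p.support := by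
      intro x hx
      obtain ⟨p, hp⟩ := hconn.exists_walk_length_eq_dist w x
      refine ⟨p, fun hmem => ?_⟩
      have hlen : (p.takeUntil ℓ hmem).length + (p.dropUntil ℓ hmem).length = p.length := by
        rw [← SimpleGraph.Walk.length_append, p.take_spec hmem]
      have h2 : G.dist w ℓ ≤ (p.takeUntil ℓ hmem).length := SimpleGraph.dist_le _
      have h3 : (p.dropUntil ℓ hmem).length ≠ 0 := fun h0 =>
        hx (SimpleGraph.Walk.eq_of_length_eq_zero h0).symm
      have h4 := hmax x (Finset.mem_univ x)
      omega
    set s : Set W := {y | y ≠ ℓ} with hsdef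
    have hws : w ∈ s := Ne.symm hlw
    have hconn' : (G.induce s).Connected := by
      apply SimpleGraph.induce_connected_of_patches w hws
      intro v hv
      obtain ⟨p, hp⟩ := hcut v hv
      refine ⟨{y | y ∈ p.support}, fun y hy he => hp (he ▸ hy), p.start_mem_support,
        p.end_mem_support, (p.connected_induce_support).preconnected _ _⟩
    have hacy' : (G.induce s).IsAcyclic := by
      intro v c hc
      exact hacy _ (hc.map (f := (SimpleGraph.Embedding.induce s).toHom) Subtype.val_injective)
    have hcard' : Fintype.card ↥s = N - 1 := by
      have h7 := Fintype.card_subtype_compl (fun y : W => y = ℓ)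
      rw [Fintype.card_subtype_eq] at h7
      have h8 : Fintype.card ↥s = Fintype.card {x : W // ¬ x = ℓ} :=
        Fintype.card_congr (Equiv.refl _)
      rw [h8, h7, hcard]
    obtain ⟨l', hnd', hall', hg1', hg2'⟩ := IH (N-1) (by omega) (G.induce s)
      ((SimpleGraph.isTree_iff _).mpr ⟨hconn', hacy'⟩) hcard'
    have hdist2 : ∀ x y : ↥s, (G.induce s).dist x y ≤ 2 → G.dist x.1 y.1 ≤ 2 := by
      intro x y h
      obtain ⟨q, hq⟩ := hconn'.exists_walk_length_eq_dist x y
      have h5 : G.dist x.1 y.1 ≤ (q.map (SimpleGraph.Embedding.induce s).toHom).length :=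
        SimpleGraph.dist_le _
      rw [SimpleGraph.Walk.length_map, hq] at h5
      omega
    obtain ⟨p0, hp0⟩ : ∃ p0, G.Adj ℓ p0 := by
      obtain ⟨pw⟩ := hconn ℓ w
      cases pw with
      | nil => exact absurd rfl hlw
      | cons hadj q => exact ⟨_, hadj⟩
    have hps : p0 ∈ s := hp0.ne'
    set l : List W := l'.map Subtype.val with hldef
    have hndl : l.Nodup := hnd'.map Subtype.val_injective
    have hmeml : ∀ y : W, y ≠ ℓ → y ∈ l := fun y hy => List.mem_map.mpr ⟨⟨y, hy⟩, hall' _, rfl⟩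
    have hnotl : ℓ ∉ l := by
      intro h
      obtain ⟨y, -, hy2⟩ := List.mem_map.mp h
      exact y.2 hy2
    have hg1 : GoodL G l := hg1'.map hdist2
    have hg2 : GoodL G l.reverse := by
      have h5 := hg2'.map hdist2
      rw [List.map_reverse] at h5
      exact h5
    have hdistpℓ : G.dist p0 ℓ ≤ 2 := by
      have h5 : G.dist p0 ℓ = 1 := SimpleGraph.dist_eq_one_iff_adj.mpr hp0.symm
      omega
    rcases Nat.lt_or_ge N 3 with hN2' | hN3
    · -- N = 2
      refine ⟨[ℓ, p0], by simp [hp0.ne], ?_, goodL_pair G (by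
          have h5 : G.dist ℓ p0 = 1 := SimpleGraph.dist_eq_one_iff_adj.mpr hp0
          omega), by
        simpa using goodL_pair G hdistpℓ⟩
      intro x
      rcases eq_or_ne x ℓ with rfl | hx
      · simp
      rcases eq_or_ne x p0 with rfl | hx2
      · simp
      exfalso
      have hd1 : ℓ ∉ ({p0, x} : Finset W) := by simp [hp0.ne, Ne.symm hx]
      have hd2 : p0 ∉ ({x} : Finset W) := by simp [Ne.symm hx2]
      have hc3 : ({ℓ, p0, x} : Finset W).card = 3 := by
        rw [Finset.card_insert_of_notMem hd1, Finset.card_insert_of_notMem hd2,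
          Finset.card_singleton]
      have h6 := Finset.card_le_univ ({ℓ, p0, x} : Finset W)
      rw [hcard, hc3] at h6
      omega
    · -- N ≥ 3
      have hcs2 : 1 < Fintype.card ↥s := by omega
      set p' : ↥s := ⟨p0, hps⟩ with hp'def
      obtain ⟨y1, hy1⟩ := Fintype.exists_ne_of_one_lt_card hcs2 p'
      obtain ⟨q0, hq0⟩ : ∃ q0 : ↥s, (G.induce s).Adj p' q0 := by
        obtain ⟨pw2⟩ := hconn' p' y1
        cases pw2 with
        | nil => exact absurd rfl hy1
        | cons hadj q => exact ⟨_, hadj⟩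
      have hq0G : G.Adj p0 q0.1 := hq0
      have hq0d : G.dist q0.1 ℓ ≤ 2 := by
        have h5 := SimpleGraph.dist_le (Walk.cons hq0G.symm (Walk.cons hp0.symm Walk.nil))
        simpa using h5
      have hq0nep : q0.1 ≠ p0 := by
        intro e
        exact hq0.ne' (Subtype.ext e)
      have hpl : p0 ∈ l := hmeml p0 hps
      obtain ⟨A, Z, hAZ⟩ := List.append_of_mem hpl
      by_cases hq0A : q0.1 ∈ A
      · refine ⟨A ++ ℓ :: p0 :: Z, ?_, ?_, ?_, ?_⟩
        · rw [List.nodup_middle, List.nodup_cons, ← hAZ]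
          exact ⟨hnotl, hndl⟩
        · intro x
          rcases eq_or_ne x ℓ with rfl | hx
          · simp
          · have h5 := hmeml x hx
            rw [hAZ] at h5
            simp only [List.mem_append, List.mem_cons] at h5 ⊢
            tauto
        · have hbase : GoodL G (A ++ p0 :: Z) := hAZ ▸ hg1
          exact hbase.insert (fun _ => ⟨q0.1, hq0A, hq0d⟩)
            (fun x z' hx hA => absurd hq0A (by rw [hA]; simp))
        · have e1 : (A ++ ℓ :: p0 :: Z).reverse = (Z.reverse ++ [p0]) ++ ℓ :: A.reverse := by
            simp
          rw [e1]
          have e2 : l.reverse = (Z.reverse ++ [p0]) ++ A.reverse := by rw [hAZ]; simp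
          have hbase : GoodL G ((Z.reverse ++ [p0]) ++ A.reverse) := e2 ▸ hg2
          exact hbase.insert (fun _ => ⟨p0, by simp, hdistpℓ⟩)
            (fun x z' hx hA => absurd (by simp : p0 ∈ Z.reverse ++ [p0]) (by rw [hA]; simp))
      · have hq0Z : q0.1 ∈ Z := by
          have h5 : q0.1 ∈ l := hmeml q0.1 q0.2
          rw [hAZ] at h5
          rcases List.mem_append.mp h5 with h | h
          · exact absurd h hq0A
          · rcases List.mem_cons.mp h with h | h
            · exact absurd h hq0nep
            · exact h
        refine ⟨A ++ p0 :: ℓ :: Z, ?_, ?_, ?_, ?_⟩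
        · have e0 : A ++ p0 :: ℓ :: Z = (A ++ [p0]) ++ ℓ :: Z := by simp
          rw [e0, List.nodup_middle, List.nodup_cons]
          constructor
          · intro hmem2
            apply hnotl
            rw [hAZ]
            simp only [List.mem_append, List.mem_cons] at hmem2 ⊢
            tauto
          · have e1 : (A ++ [p0]) ++ Z = A ++ p0 :: Z := by simp
            rw [e1, ← hAZ]
            exact hndl
        · intro x
          rcases eq_or_ne x ℓ with rfl | hx
          · simp
          · have h5 := hmeml x hx
            rw [hAZ] at h5
            simp only [List.mem_append, List.mem_cons] at h5 ⊢
            tauto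
        · have e0 : A ++ p0 :: ℓ :: Z = (A ++ [p0]) ++ ℓ :: Z := by simp
          rw [e0]
          have e1 : l = (A ++ [p0]) ++ Z := by rw [hAZ]; simp
          have hbase : GoodL G ((A ++ [p0]) ++ Z) := e1 ▸ hg1
          exact hbase.insert (fun _ => ⟨p0, by simp, hdistpℓ⟩)
            (fun x z' hx hA => absurd (by simp : p0 ∈ A ++ [p0]) (by rw [hA]; simp))
        · have e1 : (A ++ p0 :: ℓ :: Z).reverse = Z.reverse ++ ℓ :: (p0 :: A.reverse) := by
            simp
          rw [e1]
          have e2 : l.reverse = Z.reverse ++ (p0 :: A.reverse) := by rw [hAZ]; simp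
          have hbase : GoodL G (Z.reverse ++ (p0 :: A.reverse)) := e2 ▸ hg2
          exact hbase.insert
            (fun _ => ⟨q0.1, by simp [hq0Z], hq0d⟩)
            (fun x z' hx hA => by
              cases hx
              rw [SimpleGraph.dist_comm]
              exact hdistpℓ)


end TwoPart

/-- Every tree `G` with `2 * n` vertices (`n ≥ 1`) admits a partition of its
vertex set into two sets `R` and `B := Rᶜ` of size `n` each, carrying tree
structures all of whose edges join vertices at distance at most `2` in `G`. -/
theorem balanced_two_partition_dist_two {V : Type*} [Fintype V] [DecidableEq V]
    (G : SimpleGraph V) (hG : G.IsTree) (n : ℕ) (hn : 1 ≤ n)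
    (hcard : Fintype.card V = 2 * n) :
    ∃ R : Finset V, R.card = n ∧ Rᶜ.card = n ∧
      (∃ HR : SimpleGraph {x // x ∈ R}, HR.IsTree ∧
        ∀ u v : {x // x ∈ R}, HR.Adj u v → G.dist u.1 v.1 ≤ 2) ∧
      (∃ HB : SimpleGraph {x // x ∈ Rᶜ}, HB.IsTree ∧
        ∀ u v : {x // x ∈ Rᶜ}, HB.Adj u v → G.dist u.1 v.1 ≤ 2) := by
  classical
  obtain ⟨l, hnd, hall, hg1, hg2⟩ := TwoPart.key (Fintype.card V) G hG rfl
  have hlenl : l.length = 2 * n := by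
    have h1 : l.toFinset = Finset.univ :=
      Finset.eq_univ_iff_forall.mpr (fun x => List.mem_toFinset.mpr (hall x))
    have h2 := List.toFinset_card_of_nodup hnd
    rw [h1, Finset.card_univ, hcard] at h2
    omega
  set R : Finset V := (l.take n).toFinset with hRdef
  have htakelen : (l.take n).length = n := by rw [List.length_take]; omega
  have hRcard : R.card = n := by
    rw [hRdef, List.toFinset_card_of_nodup (hnd.sublist (List.take_sublist n l)), htakelen]
  have hRccard : Rᶜ.card = n := by
    rw [Finset.card_compl, hRcard, hcard]; omega
  have hmemtake : ∀ x, x ∈ R ↔ x ∈ l.take n := fun x => List.mem_toFinset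
  have hdisj : ∀ x, x ∈ l.drop n → x ∉ l.take n := by
    have h3 : (l.take n ++ l.drop n).Nodup := by rw [List.take_append_drop]; exact hnd
    have h4 := (List.nodup_append'.mp h3).2.2
    intro x hx hx2
    exact h4 hx2 hx
  have hmemdrop : ∀ x, x ∈ Rᶜ ↔ x ∈ (l.drop n).reverse := by
    intro x
    rw [Finset.mem_compl, hmemtake, List.mem_reverse]
    constructor
    · intro hx
      have h4 := hall x
      rw [← List.take_append_drop n l, List.mem_append] at h4
      tauto
    · intro hx
      exact hdisj x hx
  have hg1' : TwoPart.GoodL G (l.take n) := by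
    have h5 : l = l.take n ++ l.drop n := (List.take_append_drop n l).symm
    exact (h5 ▸ hg1).of_append_left
  have hg2' : TwoPart.GoodL G (l.drop n).reverse := by
    have h5 : l.reverse = (l.drop n).reverse ++ (l.take n).reverse := by
      rw [← List.reverse_append, List.take_append_drop]
    exact (h5 ▸ hg2).of_append_left
  have htne : l.take n ≠ [] := by
    intro h
    rw [h] at htakelen
    simp at htakelen
    omega
  have hdroplen : (l.drop n).length = n := by rw [List.length_drop]; omega
  have hdne : (l.drop n).reverse ≠ [] := by
    intro h
    have h6 := congrArg List.length h
    rw [List.length_reverse, hdroplen] at h6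
    simp at h6
    omega
  obtain ⟨HR, hHRtree, hHRd⟩ := TwoPart.tree_side (l.take n) htne
    (hnd.sublist (List.take_sublist n l)) hg1' R hmemtake
  obtain ⟨HB, hHBtree, hHBd⟩ := TwoPart.tree_side (l.drop n).reverse hdne
    (List.nodup_reverse.mpr (hnd.sublist (List.drop_sublist n l))) hg2' Rᶜ hmemdrop
  exact ⟨R, hRcard, hRccard, ⟨HR, hHRtree, hHRd⟩, ⟨HB, hHBtree, hHBd⟩⟩
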